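/- Let V be a finite set and let τ be a permutation of V. Let ℤ act on V on the right by v · m = τ^m(v), and let 𝔗 be the group of invertible elements of the monoid ℤ^V with the twisted multiplication (φ₂ * φ₁)(v) = φ₂(v) + φ₁(v · φ₂(v)). Then 𝔗 is isomorphic to the direct product, over the orbits O of τ on V, of the semidirect products ℤ^O ⋊ S(O), where the symmetric group S(O) of the orbit O acts on ℤ^O = (functions O → ℤ) by permuting coordinates. -/

import Mathlib

/-- `TwPerm τ` is the set of maps `V → ℤ`, to be equipped with the twisted
multiplication coming from the right `ℤ`-action `v · m = τ^m(v)` on `V`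
determined by the permutation `τ`. -/
def TwPerm {V : Type*} (τ : Equiv.Perm V) := V → ℤ

theorem TwPerm.key {V : Type*} (τ : Equiv.Perm V) (x y : ℤ) (v : V) :
    (τ ^ (x + y)) v = (τ ^ y) ((τ ^ x) v) := by
  rw [add_comm, zpow_add, Equiv.Perm.mul_apply]

/-- The twisted multiplication `(φ₂ * φ₁)(v) = φ₂(v) + φ₁(v · φ₂(v))`, where
`v · m = τ^m(v)`, makes `ℤ^V` a monoid. -/
instance TwPerm.instMonoid {V : Type*} (τ : Equiv.Perm V) : Monoid (TwPerm τ) where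
  mul a b := fun v => a v + b ((τ ^ (a v)) v)
  one := fun _ => 0
  mul_assoc a b c := by
    funext v
    show (a v + b _) + c ((τ ^ (a v + b _)) v) = a v + (b _ + c _)
    rw [TwPerm.key, add_assoc]
  one_mul a := by
    funext v
    show (0 : ℤ) + a ((τ ^ (0 : ℤ)) v) = a v
    simp
  mul_one a := by
    funext v
    show a v + (0 : ℤ) = a v
    simp

/-- The automorphism of `ℤ^α` (written multiplicatively) given by permuting
coordinates by `s`. -/
def permMulAut {α : Type*} (s : Equiv.Perm α) : MulAut (Multiplicative (α → ℤ)) where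
  toFun z := Multiplicative.ofAdd (Multiplicative.toAdd z ∘ ⇑s.symm)
  invFun z := Multiplicative.ofAdd (Multiplicative.toAdd z ∘ ⇑s)
  left_inv z := by simp [Function.comp_def]
  right_inv z := by simp [Function.comp_def]
  map_mul' z₁ z₂ := rfl

/-- The action of the symmetric group on `ℤ^α` by permuting coordinates,
as a homomorphism to the automorphism group. -/
def permHom (α : Type*) : Equiv.Perm α →* MulAut (Multiplicative (α → ℤ)) where
  toFun := permMulAut
  map_one' := by ext z; rfl
  map_mul' s t := by ext z; rfl

namespace Stmt16
open MulAction Equiv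

set_option linter.unusedSectionVars false

variable {V : Type*} [Finite V] (τ : Equiv.Perm V)

local notation "Q" => MulAction.orbitRel.Quotient (Subgroup.zpowers τ) V

def smap (a : TwPerm τ) (v : V) : V := (τ ^ (a v)) v

lemma mul_apply (a b : TwPerm τ) (v : V) : (a * b) v = a v + b (smap τ a v) := rfl

lemma smap_mul (a b : TwPerm τ) (v : V) :
    smap τ (a * b) v = smap τ b (smap τ a v) := by
  show (τ ^ (a v + b (smap τ a v))) v = _
  rw [TwPerm.key]; rfl

lemma smap_one (v : V) : smap τ (1 : TwPerm τ) v = v := by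
  show (τ ^ (0:ℤ)) v = v; simp

lemma zpow_neg_apply (x : ℤ) (w : V) : (τ ^ (-x)) ((τ ^ x) w) = w := by
  rw [← TwPerm.key]; simp

lemma zpow_neg_apply' {x : ℤ} {w w' : V} (h : (τ ^ x) w = w') : (τ ^ (-x)) w' = w :=
  h ▸ zpow_neg_apply τ x w

def sigma (u : (TwPerm τ)ˣ) : Equiv.Perm V where
  toFun := smap τ u.val
  invFun := smap τ u.inv
  left_inv := fun v => by rw [← smap_mul, u.val_inv, smap_one]
  right_inv := fun v => by rw [← smap_mul, u.inv_val, smap_one]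

lemma sigma_inv_apply (u : (TwPerm τ)ˣ) (v : V) : (sigma τ u)⁻¹ v = smap τ u.inv v := rfl

lemma zpow_mem_orbit (m : ℤ) (v : V) : (τ ^ m) v ∈ MulAction.orbit (Subgroup.zpowers τ) v :=
  ⟨⟨τ ^ m, Subgroup.zpow_mem _ (Subgroup.mem_zpowers τ) m⟩, rfl⟩

lemma class_zpow (m : ℤ) (v : V) :
    (Quotient.mk'' ((τ ^ m) v) : Q) = Quotient.mk'' v := by
  rw [← MulAction.orbitRel.Quotient.mem_orbit, MulAction.orbitRel.Quotient.orbit_mk]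
  exact zpow_mem_orbit τ m v

lemma class_smap (a : TwPerm τ) (v : V) :
    (Quotient.mk'' (smap τ a v) : Q) = Quotient.mk'' v := class_zpow τ _ v

lemma mem_smap {a : TwPerm τ} {O : Q} {v : V} (hv : v ∈ O.orbit) :
    smap τ a v ∈ O.orbit := by
  rw [MulAction.orbitRel.Quotient.mem_orbit] at hv ⊢
  rw [class_smap, hv]

noncomputable def bp (O : Q) : V := Quotient.out O

lemma exists_f (v : V) : ∃ m : ℤ, (τ ^ m) (bp τ (Quotient.mk'' v)) = v := by
  have h : v ∈ MulAction.orbit (Subgroup.zpowers τ) (bp τ (Quotient.mk'' v)) := by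
    unfold bp
    rw [← MulAction.orbitRel.Quotient.orbit_eq_orbit_out _ Quotient.out_eq',
      MulAction.orbitRel.Quotient.mem_orbit]
  obtain ⟨⟨g, hg⟩, hgv⟩ := h
  obtain ⟨m, rfl⟩ := hg
  exact ⟨m, hgv⟩

noncomputable def fch (v : V) : ℤ := (exists_f τ v).choose

lemma fch_spec (v : V) : (τ ^ (fch τ v)) (bp τ (Quotient.mk'' v)) = v :=
  (exists_f τ v).choose_spec

noncomputable def per (O : Q) : ℕ := Function.minimalPeriod τ (bp τ O)

lemma per_pos (O : Q) : 0 < per τ O := by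
  have : Finite (Equiv.Perm V) := by
    cases nonempty_fintype V
    classical infer_instance
  apply Function.IsPeriodicPt.minimalPeriod_pos (orderOf_pos τ)
  show Function.IsFixedPt _ _
  rw [← Equiv.Perm.coe_pow, pow_orderOf_eq_one]
  rfl

lemma per_ne (O : Q) : (per τ O : ℤ) ≠ 0 := by
  exact_mod_cast (per_pos τ O).ne'

lemma stab_bp (O : Q) (m : ℤ) : (τ ^ m) (bp τ O) = bp τ O ↔ (per τ O : ℤ) ∣ m := by
  have hnat : ∀ k : ℕ, ((τ ^ k) (bp τ O) = bp τ O ↔ per τ O ∣ k) := by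
    intro k
    unfold per
    rw [← Function.isPeriodicPt_iff_minimalPeriod_dvd]
    unfold Function.IsPeriodicPt Function.IsFixedPt
    rw [← Equiv.Perm.coe_pow]
  have habs : (τ ^ m) (bp τ O) = bp τ O ↔ (τ ^ (m.natAbs : ℤ)) (bp τ O) = bp τ O := by
    rcases Int.natAbs_eq m with h | h
    · rw [← h]
    · nth_rewrite 1 [h]
      rw [zpow_neg, zpow_natCast]
      constructor
      · intro hx
        conv_lhs => rw [← hx]
        simp
      · intro hx
        conv_lhs => rw [← hx]
        simp
  rw [habs, zpow_natCast, hnat, ← Int.natCast_dvd_natCast, Int.dvd_natAbs]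

lemma stab_v {O : Q} {v : V} (hv : v ∈ O.orbit) (m : ℤ) :
    (τ ^ m) v = v ↔ (per τ O : ℤ) ∣ m := by
  rw [MulAction.orbitRel.Quotient.mem_orbit] at hv
  subst hv
  have hb := fch_spec τ v
  rw [← stab_bp]
  constructor
  · intro h
    apply (τ ^ (fch τ v)).injective
    rw [← TwPerm.key, add_comm, TwPerm.key, hb, h]
  · intro h
    conv_lhs => rw [← hb, ← TwPerm.key, add_comm, TwPerm.key, h]
    exact hb

lemma num_dvd (a : TwPerm τ) {O : Q} {v : V} (hv : v ∈ O.orbit) :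
    (per τ O : ℤ) ∣ (a v - fch τ (smap τ a v) + fch τ v) := by
  rw [← stab_v τ hv]
  have e : a v - fch τ (smap τ a v) + fch τ v
      = (a v + (-(fch τ (smap τ a v)))) + fch τ v := by ring
  rw [e, TwPerm.key, TwPerm.key]
  show (τ ^ fch τ v) ((τ ^ (-(fch τ (smap τ a v)))) (smap τ a v)) = v
  rw [zpow_neg_apply' τ (fch_spec τ (smap τ a v)), class_smap, fch_spec]

lemma mem_iff (u : (TwPerm τ)ˣ) (O : Q) (v : V) :
    v ∈ O.orbit ↔ (sigma τ u)⁻¹ v ∈ O.orbit := by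
  rw [MulAction.orbitRel.Quotient.mem_orbit, MulAction.orbitRel.Quotient.mem_orbit,
    sigma_inv_apply, class_smap]

/-- restriction of `(sigma u)⁻¹` to an orbit. -/
def piu (u : (TwPerm τ)ˣ) (O : Q) : Equiv.Perm O.orbit :=
  Equiv.Perm.subtypePerm (sigma τ u)⁻¹ (fun v => (mem_iff τ u O v).symm)

lemma piu_apply (u : (TwPerm τ)ˣ) (O : Q) (x : O.orbit) :
    (piu τ u O x : V) = smap τ u.inv x := rfl

lemma piu_symm_apply (u : (TwPerm τ)ˣ) {O : Q} {v : V} (hv : v ∈ O.orbit) :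
    (piu τ u O).symm ⟨v, hv⟩ = ⟨smap τ u.val v, mem_smap τ hv⟩ := by
  rw [Equiv.symm_apply_eq]
  apply Subtype.ext
  show (v : V) = smap τ u.inv (smap τ u.val v)
  rw [← smap_mul, u.val_inv, smap_one]

noncomputable def ku (u : (TwPerm τ)ˣ) (O : Q) : O.orbit → ℤ :=
  fun x => (u.val x.1 - fch τ (smap τ u.val x.1) + fch τ x.1) / (per τ O)

lemma ku_spec (u : (TwPerm τ)ˣ) {O : Q} {v : V} (hv : v ∈ O.orbit) :
    (per τ O : ℤ) * ku τ u O ⟨v, hv⟩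
      = u.val v - fch τ (smap τ u.val v) + fch τ v :=
  Int.mul_ediv_cancel' (num_dvd τ u.val hv)

noncomputable def theta (u : (TwPerm τ)ˣ) :
    ∀ O : Q, Multiplicative (O.orbit → ℤ) ⋊[permHom O.orbit] Equiv.Perm O.orbit :=
  fun O => ⟨Multiplicative.ofAdd (ku τ u O), piu τ u O⟩

lemma theta_mul (u w : (TwPerm τ)ˣ) : theta τ (u * w) = theta τ u * theta τ w := by
  funext O
  rw [Pi.mul_apply]
  apply SemidirectProduct.ext
  · -- left components
    show Multiplicative.ofAdd (ku τ (u * w) O)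
      = Multiplicative.ofAdd (ku τ u O) * (permHom _ (piu τ u O)) (Multiplicative.ofAdd (ku τ w O))
    have : (permHom _ (piu τ u O)) (Multiplicative.ofAdd (ku τ w O))
        = Multiplicative.ofAdd (ku τ w O ∘ (piu τ u O).symm) := rfl
    rw [this, ← ofAdd_add]
    congr 1
    funext x
    obtain ⟨v, hv⟩ := x
    have hs : smap τ u.val v ∈ O.orbit := mem_smap τ hv
    rw [Pi.add_apply, Function.comp_apply, piu_symm_apply]
    apply mul_left_cancel₀ (per_ne τ O)
    rw [mul_add, ku_spec, ku_spec τ u hv, ku_spec τ w hs]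
    have h1 : (u * w).val v = u.val v + w.val (smap τ u.val v) := by
      rw [Units.val_mul, mul_apply]
    have h2 : smap τ (u * w).val v = smap τ w.val (smap τ u.val v) := by
      rw [Units.val_mul, smap_mul]
    rw [h1, h2]
    ring
  · -- right components
    show piu τ (u * w) O = piu τ u O * piu τ w O
    ext x
    show ((sigma τ (u*w))⁻¹ (x : V)) = _
    rw [sigma_inv_apply]
    show smap τ (w.inv * u.inv) (x : V) = smap τ u.inv (smap τ w.inv (x : V))
    rw [smap_mul]

lemma theta_inj : Function.Injective (theta τ) := by
  intro u u' h
  apply Units.ext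
  funext v
  set O : Q := Quotient.mk'' v with hO
  have hv : v ∈ MulAction.orbitRel.Quotient.orbit O :=
    (MulAction.orbitRel.Quotient.mem_orbit).mpr rfl
  have hc := congrFun h O
  have hR : piu τ u O = piu τ u' O := congrArg SemidirectProduct.right hc
  have hS : smap τ u.val v = smap τ u'.val v := by
    have := congrArg (fun p : Equiv.Perm O.orbit => ((p.symm ⟨v, hv⟩ : O.orbit) : V)) hR
    simpa [piu_symm_apply τ _ hv] using this
  have hL : ku τ u O = ku τ u' O := by
    have := congrArg SemidirectProduct.left hc
    exact congrArg Multiplicative.toAdd this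
  have h1 := ku_spec τ u hv
  have h2 := ku_spec τ u' hv
  rw [hL] at h1
  rw [hS] at h1
  have := h1.symm.trans h2
  omega

/-- The target group. -/
abbrev Tgt : Type _ :=
  ∀ O : Q, Multiplicative (O.orbit → ℤ) ⋊[permHom O.orbit] Equiv.Perm O.orbit

def Pv (g : Tgt τ) (O : Q) (v : V) (hv : v ∈ O.orbit) : V :=
  (((g O).right)⁻¹ ⟨v, hv⟩ : O.orbit)

lemma Pv_mem (g : Tgt τ) (O : Q) (v : V) (hv : v ∈ O.orbit) : Pv τ g O v hv ∈ O.orbit :=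
  Subtype.prop _

lemma Pv_inv (g : Tgt τ) (O : Q) (v : V) (hv : v ∈ O.orbit) :
    Pv τ g⁻¹ O v hv = ((g O).right ⟨v, hv⟩ : O.orbit) := by
  unfold Pv
  rw [Pi.inv_apply, SemidirectProduct.inv_right, inv_inv]

lemma Pv_Pv (g : Tgt τ) (O : Q) (v : V) (hv : v ∈ O.orbit) :
    Pv τ g⁻¹ O (Pv τ g O v hv) (Pv_mem τ g O v hv) = v := by
  rw [Pv_inv]
  have e : (⟨Pv τ g O v hv, Pv_mem τ g O v hv⟩ : O.orbit) = ((g O).right)⁻¹ ⟨v, hv⟩ := rfl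
  rw [e, ← Equiv.Perm.mul_apply, mul_inv_cancel, Equiv.Perm.one_apply]

lemma right_Pv (g : Tgt τ) (O : Q) (v : V) (hv : v ∈ O.orbit) :
    (g O).right ⟨Pv τ g O v hv, Pv_mem τ g O v hv⟩ = ⟨v, hv⟩ := by
  have e : (⟨Pv τ g O v hv, Pv_mem τ g O v hv⟩ : O.orbit) = ((g O).right)⁻¹ ⟨v, hv⟩ := rfl
  rw [e, ← Equiv.Perm.mul_apply, mul_inv_cancel, Equiv.Perm.one_apply]

lemma toAdd_left_inv (g : Tgt τ) (O : Q) (x : O.orbit) :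
    Multiplicative.toAdd ((g⁻¹) O).left x
      = -(Multiplicative.toAdd (g O).left ((g O).right x)) := rfl

noncomputable def AO (g : Tgt τ) (O : Q) (v : V) (hv : v ∈ O.orbit) : ℤ :=
  (-(fch τ v) + fch τ (Pv τ g O v hv))
    + (per τ O : ℤ) * (Multiplicative.toAdd (g O).left ⟨v, hv⟩)

noncomputable def Ag (g : Tgt τ) : TwPerm τ :=
  fun v => AO τ g (Quotient.mk'' v) v ((MulAction.orbitRel.Quotient.mem_orbit).mpr rfl)

lemma Ag_eq (g : Tgt τ) {O : Q} {v : V} (hv : v ∈ O.orbit) : Ag τ g v = AO τ g O v hv := by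
  have h := (MulAction.orbitRel.Quotient.mem_orbit).mp hv
  subst h
  rfl

lemma smap_Ag (g : Tgt τ) {O : Q} {v : V} (hv : v ∈ O.orbit) :
    smap τ (Ag τ g) v = Pv τ g O v hv := by
  have hm : (Quotient.mk'' v : Q) = O := (MulAction.orbitRel.Quotient.mem_orbit).mp hv
  have hm' : (Quotient.mk'' (Pv τ g O v hv) : Q) = O :=
    (MulAction.orbitRel.Quotient.mem_orbit).mp (Pv_mem τ g O v hv)
  show (τ ^ (Ag τ g v)) v = _
  rw [Ag_eq τ g hv]
  show (τ ^ ((-(fch τ v) + fch τ (Pv τ g O v hv))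
      + (per τ O : ℤ) * (Multiplicative.toAdd (g O).left ⟨v, hv⟩))) v = _
  have hbp : bp τ (Quotient.mk'' v) = bp τ (Quotient.mk'' (Pv τ g O v hv)) := by
    rw [hm, hm']
  rw [TwPerm.key, TwPerm.key, zpow_neg_apply' τ (fch_spec τ v), hbp, fch_spec]
  exact (stab_v τ (Pv_mem τ g O v hv) _).mpr ⟨_, rfl⟩

lemma Ag_mul_inv (g : Tgt τ) : (Ag τ g) * (Ag τ g⁻¹) = 1 := by
  funext v
  set O : Q := Quotient.mk'' v with hO
  have hv : v ∈ MulAction.orbitRel.Quotient.orbit O :=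
    (MulAction.orbitRel.Quotient.mem_orbit).mpr rfl
  have hsm : Pv τ g O v hv ∈ MulAction.orbitRel.Quotient.orbit O := Pv_mem τ g O v hv
  show (Ag τ g * Ag τ g⁻¹) v = 0
  rw [mul_apply, smap_Ag τ g hv, Ag_eq τ g hv, Ag_eq τ g⁻¹ hsm]
  unfold AO
  rw [Pv_Pv τ g O v hv, toAdd_left_inv, right_Pv τ g O v hv]
  ring

noncomputable def Ug (g : Tgt τ) : (TwPerm τ)ˣ where
  val := Ag τ g
  inv := Ag τ g⁻¹
  val_inv := Ag_mul_inv τ g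
  inv_val := by
    have := Ag_mul_inv τ g⁻¹
    rwa [inv_inv] at this

lemma theta_surj : Function.Surjective (theta τ) := by
  intro g
  refine ⟨Ug τ g, ?_⟩
  funext O
  apply SemidirectProduct.ext
  · -- left
    show Multiplicative.ofAdd (ku τ (Ug τ g) O) = (g O).left
    rw [show (g O).left = Multiplicative.ofAdd (Multiplicative.toAdd (g O).left) from rfl]
    congr 1
    funext x
    obtain ⟨v, hv⟩ := x
    apply mul_left_cancel₀ (per_ne τ O)
    rw [ku_spec τ (Ug τ g) hv]
    have h1 : (Ug τ g).val = Ag τ g := rfl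
    have h2 : smap τ (Ag τ g) v = Pv τ g O v hv := smap_Ag τ g hv
    rw [h1, h2, Ag_eq τ g hv]
    unfold AO
    ring
  · -- right
    show piu τ (Ug τ g) O = (g O).right
    ext x
    obtain ⟨v, hv⟩ := x
    have h1 : ((piu τ (Ug τ g) O ⟨v, hv⟩ : O.orbit) : V) = smap τ (Ag τ g⁻¹) v := rfl
    have h2 : smap τ (Ag τ g⁻¹) v = Pv τ g⁻¹ O v hv := smap_Ag τ g⁻¹ hv
    rw [h1, h2, Pv_inv]

end Stmt16

/-- Let `V` be a finite set and `τ` a permutation of `V`, and let `ℤ` act on `V`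
on the right by `v · m = τ^m(v)`. The group `𝔗` of invertible elements of the
monoid `ℤ^V` with the twisted multiplication is isomorphic to the direct
product, over the orbits `O` of `τ` on `V` (i.e. the orbits of the cyclic group
`⟨τ⟩ ≤ Perm V`), of the semidirect products `ℤ^O ⋊ S(O)`, where `S(O)` acts on
`ℤ^O` by permuting coordinates. -/
theorem stmt_16 {V : Type*} [Finite V] (τ : Equiv.Perm V) :
    Nonempty ((TwPerm τ)ˣ ≃*
      ∀ O : MulAction.orbitRel.Quotient (Subgroup.zpowers τ) V,
        Multiplicative (↥(MulAction.orbitRel.Quotient.orbit O) → ℤ)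
          ⋊[permHom ↥(MulAction.orbitRel.Quotient.orbit O)]
          Equiv.Perm ↥(MulAction.orbitRel.Quotient.orbit O)) := by
  exact ⟨MulEquiv.ofBijective (MonoidHom.mk' (Stmt16.theta τ) (Stmt16.theta_mul τ))
    ⟨Stmt16.theta_inj τ, Stmt16.theta_surj τ⟩⟩
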